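/- Let h be a Riemannian metric on a manifold M and W a vector field with h(W,W) < 1. Define λ = 1 - h(W,W) and the Randers norm F(y) = (sqrt(λ·h(y,y) + h(W,y)²) - h(W,y))/λ. Then for any tangent vector y, F(y) = 1 if and only if h(y - W, y - W) = 1. -/

import Mathlib

/-- Pointwise Zermelo navigation lemma: the Randers norm `F` satisfies `F(y) = 1`
iff `h(y - W, y - W) = 1`. -/
theorem stmt0 {V : Type*} [AddCommGroup V] [Module ℝ V]
    (h : LinearMap.BilinForm ℝ V)
    (hsymm : ∀ u v : V, h u v = h v u)
    (hpos : ∀ v : V, v ≠ 0 → 0 < h v v)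
    (W : V) (hW : h W W < 1) (y : V) :
    (Real.sqrt ((1 - h W W) * h y y + (h W y) ^ 2) - h W y) / (1 - h W W) = 1 ↔
      h (y - W) (y - W) = 1 := by
  set a := h y y with ha_def
  set b := h W y with hb_def
  set c := h W W with hc_def
  have hl : 0 < 1 - c := by linarith
  have ha : 0 ≤ a := by
    rcases eq_or_ne y 0 with rfl | hy
    · simp [ha_def]
    · exact le_of_lt (hpos y hy)
  have hexp : h (y - W) (y - W) = a - 2 * b + c := by
    have := hsymm y W
    simp only [map_sub, LinearMap.sub_apply, ha_def, hb_def, hc_def]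
    linarith
  have hSnn : 0 ≤ (1 - c) * a + b ^ 2 := by positivity
  rw [hexp]
  constructor
  · intro heq
    have hsq : Real.sqrt ((1 - c) * a + b ^ 2) = 1 - c + b := by
      field_simp at heq
      linarith
    have h2 : (1 - c) * a + b ^ 2 = (1 - c + b) ^ 2 := by
      rw [← hsq, Real.sq_sqrt hSnn]
    nlinarith
  · intro heq
    have hnn : 0 ≤ 1 - c + b := by nlinarith
    have h2 : (1 - c) * a + b ^ 2 = (1 - c + b) ^ 2 := by nlinarith
    rw [h2, Real.sqrt_sq hnn]
    field_simp
    ring
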